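/- Let A and B be groups and W ⊆ F_∞ a set of words. Then in the verbal product A ∗_W B one has W(A ∗_W B) ∩ [A,B]^w = {1}. -/

import Mathlib

open Monoid
open scoped commutatorElement

/-- The verbal subgroup `W(G)`: the subgroup of `G` generated by all evaluations of the
words of `W` at tuples of elements of `G`. -/
def verbalSubgroup (W : Set (FreeGroup ℕ)) (G : Type*) [Group G] : Subgroup G :=
  Subgroup.closure {x | ∃ w ∈ W, ∃ f : ℕ → G, FreeGroup.lift f w = x}

theorem lift_comp_eval {G H : Type*} [Group G] [Group H] (φ : G →* H) (f : ℕ → G)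
    (w : FreeGroup ℕ) : φ (FreeGroup.lift f w) = FreeGroup.lift (φ ∘ f) w := by
  have h : φ.comp (FreeGroup.lift f) = FreeGroup.lift (φ ∘ f) :=
    FreeGroup.ext_hom _ _ (fun a => by simp)
  exact DFunLike.congr_fun h w

theorem verbalSubgroup_map_le {G H : Type*} [Group G] [Group H] (W : Set (FreeGroup ℕ))
    (φ : G →* H) : (verbalSubgroup W G).map φ ≤ verbalSubgroup W H := by
  rw [verbalSubgroup, MonoidHom.map_closure, Subgroup.closure_le]
  rintro x ⟨y, ⟨w, hw, f, rfl⟩, rfl⟩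
  exact Subgroup.subset_closure ⟨w, hw, φ ∘ f, (lift_comp_eval φ f w).symm⟩

/-- Verbal subgroups are normal. -/
instance verbalSubgroup_normal (W : Set (FreeGroup ℕ)) (G : Type*) [Group G] :
    (verbalSubgroup W G).Normal := by
  constructor
  intro n hn g
  have h := verbalSubgroup_map_le (G := G) (H := G) W (MulAut.conj g).toMonoidHom
  have h2 : (MulAut.conj g).toMonoidHom n ∈ verbalSubgroup W G := h ⟨n, hn, rfl⟩
  simpa using h2

/-- The subgroup `[A,B]` of the free product `A ∗ B` generated by the commutators
`[a,b] = a * b * a⁻¹ * b⁻¹` with `a ∈ A`, `b ∈ B`. -/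
def commSubgroup (A B : Type*) [Group A] [Group B] : Subgroup (Coprod A B) :=
  Subgroup.closure {x | ∃ (a : A) (b : B), x = ⁅(Coprod.inl a : Coprod A B), Coprod.inr b⁆}

/-- The kernel of the verbal product: (the normal closure of) `W(A ∗ B) ∩ [A,B]`.
Since `W(A ∗ B) ∩ [A,B]` is in fact a normal subgroup of `A ∗ B`, taking the normal
closure does not change the subgroup. -/
def verbalProductKer (W : Set (FreeGroup ℕ)) (A B : Type*) [Group A] [Group B] :
    Subgroup (Coprod A B) :=
  Subgroup.normalClosure ((verbalSubgroup W (Coprod A B) ⊓ commSubgroup A B : Subgroup _) : Set _)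

instance verbalProductKer_normal (W : Set (FreeGroup ℕ)) (A B : Type*) [Group A] [Group B] :
    (verbalProductKer W A B).Normal := Subgroup.normalClosure_normal

/-- The verbal product `A ∗_W B := (A ∗ B)/(W(A ∗ B) ∩ [A,B])`. -/
abbrev VerbalProduct (W : Set (FreeGroup ℕ)) (A B : Type*) [Group A] [Group B] : Type _ :=
  Coprod A B ⧸ verbalProductKer W A B

/-- The quotient homomorphism `q : A ∗ B → A ∗_W B`. -/
def vq (W : Set (FreeGroup ℕ)) (A B : Type*) [Group A] [Group B] :
    Coprod A B →* VerbalProduct W A B :=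
  QuotientGroup.mk' (verbalProductKer W A B)

/-- The copy of `A` inside the verbal product `A ∗_W B`. -/
def vinl (W : Set (FreeGroup ℕ)) (A B : Type*) [Group A] [Group B] :
    A →* VerbalProduct W A B := (vq W A B).comp Coprod.inl

/-- The copy of `B` inside the verbal product `A ∗_W B`. -/
def vinr (W : Set (FreeGroup ℕ)) (A B : Type*) [Group A] [Group B] :
    B →* VerbalProduct W A B := (vq W A B).comp Coprod.inr

/-- `[A,B]^w`, the image of `[A,B]` in the verbal product `A ∗_W B`. -/
def commW (W : Set (FreeGroup ℕ)) (A B : Type*) [Group A] [Group B] :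
    Subgroup (VerbalProduct W A B) := (commSubgroup A B).map (vq W A B)

theorem conj_commSubgroup_le {A B : Type*} [Group A] [Group B] (g : Coprod A B) :
    (commSubgroup A B).map (MulAut.conj g).toMonoidHom ≤ commSubgroup A B := by
  induction g using Coprod.induction_on with
  | inl a =>
    rw [commSubgroup, MonoidHom.map_closure, Subgroup.closure_le]
    rintro x ⟨y, ⟨a₀, b₀, rfl⟩, rfl⟩
    have key : (MulAut.conj (Coprod.inl a : Coprod A B)).toMonoidHom
        ⁅(Coprod.inl a₀ : Coprod A B), Coprod.inr b₀⁆ =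
        ⁅(Coprod.inl (a * a₀) : Coprod A B), Coprod.inr b₀⁆ *
          ⁅(Coprod.inl a : Coprod A B), Coprod.inr b₀⁆⁻¹ := by
      simp only [MulAut.conj_apply, MulEquiv.toMonoidHom_eq_coe, MonoidHom.coe_coe,
        commutatorElement_def, map_mul]
      group
    rw [key]
    exact mul_mem (Subgroup.subset_closure ⟨_, _, rfl⟩)
      (inv_mem (Subgroup.subset_closure ⟨_, _, rfl⟩))
  | inr b =>
    rw [commSubgroup, MonoidHom.map_closure, Subgroup.closure_le]
    rintro x ⟨y, ⟨a₀, b₀, rfl⟩, rfl⟩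
    have key : (MulAut.conj (Coprod.inr b : Coprod A B)).toMonoidHom
        ⁅(Coprod.inl a₀ : Coprod A B), Coprod.inr b₀⁆ =
        ⁅(Coprod.inl a₀ : Coprod A B), Coprod.inr b⁆⁻¹ *
          ⁅(Coprod.inl a₀ : Coprod A B), Coprod.inr (b * b₀)⁆ := by
      simp only [MulAut.conj_apply, MulEquiv.toMonoidHom_eq_coe, MonoidHom.coe_coe,
        commutatorElement_def, map_mul]
      group
    rw [key]
    exact mul_mem (inv_mem (Subgroup.subset_closure ⟨_, _, rfl⟩))
      (Subgroup.subset_closure ⟨_, _, rfl⟩)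
  | mul x y hx hy =>
    intro z hz
    obtain ⟨n, hn, rfl⟩ := hz
    have h1 : (MulAut.conj y).toMonoidHom n ∈ commSubgroup A B := hy ⟨n, hn, rfl⟩
    have h2 : (MulAut.conj x).toMonoidHom ((MulAut.conj y).toMonoidHom n)
        ∈ commSubgroup A B := hx ⟨_, h1, rfl⟩
    simpa [mul_assoc] using h2

instance commSubgroup_normal (A B : Type*) [Group A] [Group B] : (commSubgroup A B).Normal := by
  constructor
  intro n hn g
  have := conj_commSubgroup_le (A := A) (B := B) g ⟨n, hn, rfl⟩
  simpa using this

theorem verbalProductKer_eq (W : Set (FreeGroup ℕ)) (A B : Type*) [Group A] [Group B] :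
    verbalProductKer W A B = verbalSubgroup W (Coprod A B) ⊓ commSubgroup A B :=
  Subgroup.normalClosure_eq_self _

theorem verbal_quotient_le {A B : Type*} [Group A] [Group B] (W : Set (FreeGroup ℕ)) :
    verbalSubgroup W (VerbalProduct W A B)
      ≤ (verbalSubgroup W (Coprod A B)).map (vq W A B) := by
  rw [verbalSubgroup, Subgroup.closure_le]
  rintro x ⟨w, hw, f, rfl⟩
  have hsurj : Function.Surjective (vq W A B) := QuotientGroup.mk'_surjective _
  choose g hg using fun n => hsurj (f n)
  refine ⟨FreeGroup.lift g w, Subgroup.subset_closure ⟨w, hw, g, rfl⟩, ?_⟩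
  rw [lift_comp_eval, show ⇑(vq W A B) ∘ g = f from funext hg]

/-- In the verbal product `A ∗_W B` one has `W(A ∗_W B) ∩ [A,B]^w = {1}`. -/
theorem verbalSubgroup_inf_commW_eq_bot {A B : Type*} [Group A] [Group B]
    (W : Set (FreeGroup ℕ)) :
    verbalSubgroup W (VerbalProduct W A B) ⊓ commW W A B = ⊥ := by
  rw [eq_bot_iff]
  rintro x ⟨hxv, hxc⟩
  obtain ⟨c, hc, rfl⟩ := hxc
  obtain ⟨v, hv, hvc⟩ := verbal_quotient_le W hxv
  have hker : v * c⁻¹ ∈ verbalProductKer W A B := by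
    rw [← QuotientGroup.ker_mk' (verbalProductKer W A B)]
    show vq W A B (v * c⁻¹) = 1
    rw [map_mul, map_inv, hvc, mul_inv_eq_one]
  rw [verbalProductKer_eq] at hker
  have hvcomm : v ∈ commSubgroup A B := by
    have : (v * c⁻¹) * c ∈ commSubgroup A B := mul_mem hker.2 hc
    simpa using this
  have : v ∈ verbalProductKer W A B := by
    rw [verbalProductKer_eq]; exact ⟨hv, hvcomm⟩
  have : vq W A B v = 1 := by
    rw [← QuotientGroup.ker_mk' (verbalProductKer W A B)] at this; exact this
  rw [hvc] at this
  simp [this]
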